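/- arXiv:1408.6795 — 2 statements merged into one kernel-verified Lean document; each statement's English description precedes it below -/
import Mathlib

section
/- For every t ≥ 0, the error function satisfies the bounds (1 − exp(−t²))^{1/2} ≤ erf(t) ≤ (1 − exp(−2t²))^{1/2}. -/
open Real MeasureTheory intervalIntegral

noncomputable def erfI (t : ℝ) : ℝ := ∫ u in (0:ℝ)..t, Real.exp (-u ^ 2)

noncomputable def erfG (t : ℝ) : ℝ :=
  ∫ s in (0:ℝ)..(1:ℝ), Real.exp (-t ^ 2 * (1 + s ^ 2)) / (1 + s ^ 2)

lemma cont_gauss : Continuous fun u : ℝ => Real.exp (-u ^ 2) := by continuity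

lemma one_add_sq_pos (s : ℝ) : (0:ℝ) < 1 + s ^ 2 := by positivity

lemma cont_gFun (t : ℝ) :
    Continuous fun s : ℝ => Real.exp (-t ^ 2 * (1 + s ^ 2)) / (1 + s ^ 2) := by
  apply Continuous.div (by continuity) (by continuity)
  exact fun s => (one_add_sq_pos s).ne'

lemma hasDerivAt_erfI (t : ℝ) : HasDerivAt erfI (Real.exp (-t ^ 2)) t :=
  intervalIntegral.integral_hasDerivAt_right (cont_gauss.intervalIntegrable _ _)
    cont_gauss.aestronglyMeasurable.stronglyMeasurableAtFilter cont_gauss.continuousAt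

lemma hasDerivAt_erfG (t : ℝ) :
    HasDerivAt erfG (-2 * Real.exp (-t ^ 2) * erfI t) t := by
  have key := _root_.hasDerivAt_integral_of_dominated_loc_of_deriv_le
    (μ := volume.restrict (Set.Ioc (0:ℝ) 1)) (x₀ := t)
    (F := fun x s => Real.exp (-x ^ 2 * (1 + s ^ 2)) / (1 + s ^ 2))
    (F' := fun x s => -2 * x * Real.exp (-x ^ 2 * (1 + s ^ 2)))
    (bound := fun _ => 2 * (|t| + 1)) (Metric.ball_mem_nhds t one_pos)
    (Filter.Eventually.of_forall fun x => (cont_gFun x).aestronglyMeasurable)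
    ((cont_gFun t).integrableOn_Ioc)
    (by apply Continuous.aestronglyMeasurable; continuity)
    (Filter.Eventually.of_forall fun s => ?_)
    (integrableOn_const (by simp))
    (Filter.Eventually.of_forall fun s => ?_)
  · -- assemble
    obtain ⟨-, hd⟩ := key
    have heq : erfG = fun x : ℝ => ∫ s in Set.Ioc (0:ℝ) 1,
        Real.exp (-x ^ 2 * (1 + s ^ 2)) / (1 + s ^ 2) := by
      funext x
      rw [erfG, intervalIntegral.integral_of_le zero_le_one]
    rw [heq]
    refine hd.congr_deriv (Eq.symm ?_)
    rw [← intervalIntegral.integral_of_le zero_le_one]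
    symm
    have hsub : (t • ∫ s in (0:ℝ)..(1:ℝ), Real.exp (-(t * s) ^ 2))
        = ∫ u in (t*0)..(t*1), Real.exp (-u ^ 2) :=
      intervalIntegral.smul_integral_comp_mul_left (fun u => Real.exp (-u ^ 2)) t
    simp only [mul_zero, mul_one, smul_eq_mul] at hsub
    have hpt : ∀ s : ℝ, -2 * t * Real.exp (-t ^ 2 * (1 + s ^ 2))
        = (-2 * Real.exp (-t ^ 2) * t) * Real.exp (-(t * s) ^ 2) := by
      intro s
      rw [show -t ^ 2 * (1 + s ^ 2) = -t ^ 2 + -(t * s) ^ 2 by ring, Real.exp_add]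
      ring
    calc (∫ s in (0:ℝ)..(1:ℝ), -2 * t * Real.exp (-t ^ 2 * (1 + s ^ 2)))
        = ∫ s in (0:ℝ)..(1:ℝ), (-2 * Real.exp (-t ^ 2) * t) * Real.exp (-(t * s) ^ 2) :=
          intervalIntegral.integral_congr (fun s _ => hpt s)
      _ = (-2 * Real.exp (-t ^ 2) * t) * ∫ s in (0:ℝ)..(1:ℝ), Real.exp (-(t * s) ^ 2) :=
          intervalIntegral.integral_const_mul _ _
      _ = -2 * Real.exp (-t ^ 2) * erfI t := by rw [erfI, ← hsub]; ring
  · -- bound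
    intro x hx
    have hxle : |x| ≤ |t| + 1 := by
      have := abs_sub_abs_le_abs_sub x t
      have h2 : |x - t| < 1 := by simpa [Real.dist_eq] using hx
      linarith
    have hexp : Real.exp (-x ^ 2 * (1 + s ^ 2)) ≤ 1 := by
      apply Real.exp_le_one_iff.2
      nlinarith [sq_nonneg x, sq_nonneg s]
    have : ‖-2 * x * Real.exp (-x ^ 2 * (1 + s ^ 2))‖
        = 2 * |x| * Real.exp (-x ^ 2 * (1 + s ^ 2)) := by
      rw [norm_mul, norm_mul]
      simp [abs_of_nonneg (Real.exp_pos _).le]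
    rw [this]
    calc 2 * |x| * Real.exp (-x ^ 2 * (1 + s ^ 2)) ≤ 2 * |x| * 1 := by
          apply mul_le_mul_of_nonneg_left hexp (by positivity)
      _ ≤ 2 * (|t| + 1) := by rw [mul_one]; linarith
  · -- differentiability
    intro x hx
    have h1 : HasDerivAt (fun x : ℝ => -x ^ 2 * (1 + s ^ 2)) (-(2 * x) * (1 + s ^ 2)) x := by
      simpa using ((hasDerivAt_pow 2 x).neg.mul_const (1 + s ^ 2))
    have h2 := (h1.exp).div_const (1 + s ^ 2)
    refine h2.congr_deriv (Eq.symm ?_)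
    field_simp

lemma erfI_sq_add_erfG (t : ℝ) : erfI t ^ 2 + erfG t = π / 4 := by
  have hder : ∀ x : ℝ, HasDerivAt (fun y => erfI y ^ 2 + erfG y) 0 x := by
    intro x
    have h1 : HasDerivAt (fun y => erfI y ^ 2 + erfG y) _ x :=
      ((hasDerivAt_erfI x).pow 2).add (hasDerivAt_erfG x)
    convert h1 using 1
    ring
  have hconst : ∀ x : ℝ, erfI x ^ 2 + erfG x = erfI 0 ^ 2 + erfG 0 := by
    intro x
    exact is_const_of_deriv_eq_zero (fun y => (hder y).differentiableAt)
      (fun y => (hder y).deriv) x 0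
  have h0 : erfI 0 ^ 2 + erfG 0 = π / 4 := by
    have hI0 : erfI 0 = 0 := intervalIntegral.integral_same
    have hG0 : erfG 0 = π / 4 := by
      rw [erfG]
      simp only [ne_eq, OfNat.ofNat_ne_zero, not_false_eq_true, zero_pow, neg_zero, zero_mul,
        Real.exp_zero]
      rw [show (fun s : ℝ => (1:ℝ) / (1 + s ^ 2)) = fun s : ℝ => 1 / (1 + s ^ 2) from rfl]
      rw [integral_one_div_one_add_sq]
      simp [Real.arctan_one]
    rw [hI0, hG0]; ring
  rw [hconst t, h0]

lemma integral_inv_one_add_sq_01 :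
    (∫ s in (0:ℝ)..(1:ℝ), 1 / (1 + s ^ 2)) = π / 4 := by
  rw [integral_one_div_one_add_sq]
  simp [Real.arctan_one]

lemma erfG_le (t : ℝ) : erfG t ≤ π / 4 * Real.exp (-t ^ 2) := by
  have hc : Continuous fun s : ℝ => Real.exp (-t ^ 2) * (1 / (1 + s ^ 2)) := by
    apply Continuous.mul continuous_const
    apply Continuous.div continuous_const (by continuity)
    exact fun s => (one_add_sq_pos s).ne'
  have h1 : erfG t ≤ ∫ s in (0:ℝ)..(1:ℝ), Real.exp (-t ^ 2) * (1 / (1 + s ^ 2)) := by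
    apply intervalIntegral.integral_mono_on zero_le_one
      ((cont_gFun t).intervalIntegrable _ _) (hc.intervalIntegrable _ _)
    intro s _
    rw [mul_one_div]
    apply div_le_div_of_nonneg_right ?_ (one_add_sq_pos s).le
    apply Real.exp_le_exp.2
    nlinarith [sq_nonneg (t * s)]
  calc erfG t ≤ _ := h1
    _ = Real.exp (-t ^ 2) * ∫ s in (0:ℝ)..(1:ℝ), 1 / (1 + s ^ 2) :=
        intervalIntegral.integral_const_mul _ _
    _ = π / 4 * Real.exp (-t ^ 2) := by rw [integral_inv_one_add_sq_01]; ring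

lemma le_erfG (t : ℝ) : π / 4 * Real.exp (-2 * t ^ 2) ≤ erfG t := by
  have hc : Continuous fun s : ℝ => Real.exp (-2 * t ^ 2) * (1 / (1 + s ^ 2)) := by
    apply Continuous.mul continuous_const
    apply Continuous.div continuous_const (by continuity)
    exact fun s => (one_add_sq_pos s).ne'
  have h1 : (∫ s in (0:ℝ)..(1:ℝ), Real.exp (-2 * t ^ 2) * (1 / (1 + s ^ 2))) ≤ erfG t := by
    apply intervalIntegral.integral_mono_on zero_le_one
      (hc.intervalIntegrable _ _) ((cont_gFun t).intervalIntegrable _ _)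
    intro s hs
    rw [mul_one_div]
    apply div_le_div_of_nonneg_right ?_ (one_add_sq_pos s).le
    apply Real.exp_le_exp.2
    have hs2 : s ^ 2 ≤ 1 := by
      rcases hs with ⟨h0, h1'⟩; nlinarith
    nlinarith [sq_nonneg t]
  calc π / 4 * Real.exp (-2 * t ^ 2)
      = Real.exp (-2 * t ^ 2) * ∫ s in (0:ℝ)..(1:ℝ), 1 / (1 + s ^ 2) := by
        rw [integral_inv_one_add_sq_01]; ring
    _ = ∫ s in (0:ℝ)..(1:ℝ), Real.exp (-2 * t ^ 2) * (1 / (1 + s ^ 2)) :=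
        (intervalIntegral.integral_const_mul _ _).symm
    _ ≤ erfG t := h1

noncomputable def erf (t : ℝ) : ℝ := (2 / Real.sqrt π) * ∫ u in (0:ℝ)..t, Real.exp (-u ^ 2)

/-- For every t ≥ 0, `(1 − exp(−t²))^(1/2) ≤ erf(t) ≤ (1 − exp(−2t²))^(1/2)`. -/
theorem erf_bounds (t : ℝ) (ht : 0 ≤ t) :
    Real.sqrt (1 - Real.exp (-t ^ 2)) ≤ erf t ∧
      erf t ≤ Real.sqrt (1 - Real.exp (-2 * t ^ 2)) := by
  have hpi : (0:ℝ) < π := Real.pi_pos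
  have hInn : 0 ≤ erfI t := by
    apply intervalIntegral.integral_nonneg ht
    intro u _; exact (Real.exp_pos _).le
  have herf : erf t = (2 / Real.sqrt π) * erfI t := rfl
  have herf_nonneg : 0 ≤ erf t := by
    rw [herf]; positivity
  have hsq : erf t ^ 2 = 4 / π * erfI t ^ 2 := by
    rw [herf, mul_pow, div_pow, Real.sq_sqrt hpi.le]
    ring
  have hiden := erfI_sq_add_erfG t
  constructor
  · have h2 : 1 - Real.exp (-t ^ 2) ≤ erf t ^ 2 := by
      rw [hsq]
      have := erfG_le t
      have h3 : erfI t ^ 2 = π / 4 - erfG t := by linarith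
      rw [h3]
      have h4 : π / 4 - erfG t ≥ π / 4 - π / 4 * Real.exp (-t ^ 2) := by linarith
      calc 1 - Real.exp (-t ^ 2)
          = 4 / π * (π / 4 - π / 4 * Real.exp (-t ^ 2)) := by field_simp
        _ ≤ 4 / π * (π / 4 - erfG t) := by
            apply mul_le_mul_of_nonneg_left (by linarith) (by positivity)
    calc Real.sqrt (1 - Real.exp (-t ^ 2)) ≤ Real.sqrt (erf t ^ 2) := Real.sqrt_le_sqrt h2
      _ = erf t := Real.sqrt_sq herf_nonneg
  · have h2 : erf t ^ 2 ≤ 1 - Real.exp (-2 * t ^ 2) := by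
      rw [hsq]
      have := le_erfG t
      have h3 : erfI t ^ 2 = π / 4 - erfG t := by linarith
      rw [h3]
      calc 4 / π * (π / 4 - erfG t)
          ≤ 4 / π * (π / 4 - π / 4 * Real.exp (-2 * t ^ 2)) := by
            apply mul_le_mul_of_nonneg_left (by linarith) (by positivity)
        _ = 1 - Real.exp (-2 * t ^ 2) := by field_simp
    have hle1 : Real.exp (-2 * t ^ 2) ≤ 1 := Real.exp_le_one_iff.2 (by nlinarith [sq_nonneg t])
    exact (Real.le_sqrt herf_nonneg (by linarith)).2 h2
end

section
/- Let A be a real m × n matrix, b ∈ ℝᵐ, and τ, σ > 0. Define H_{1,σ} : ℝⁿ → ℝ by H_{1,σ}(x) = ‖Ax − b‖₂² + 2τ ∑_{k=1}^n ( x_k · erf(x_k/(√2 σ)) + √(2/π) · σ · exp(−x_k²/(2σ²)) ). Then H_{1,σ} is differentiable everywhere, and its gradient is ∇H_{1,σ}(x) = 2Aᵀ(Ax − b) + 2τ v(x), where v(x) ∈ ℝⁿ is the vector with components v(x)_k = erf(x_k/(√2 σ)). -/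
open Real Finset Matrix

/-- The smoothed ℓ₁ regularized least-squares functional
`H_{1,σ}(x) = ‖Ax − b‖₂² + 2τ ∑_k (x_k erf(x_k/(√2σ)) + √(2/π) σ exp(−x_k²/(2σ²)))`. -/
noncomputable def H1 {m n : ℕ} (A : Matrix (Fin m) (Fin n) ℝ) (b : Fin m → ℝ)
    (τ σ : ℝ) (x : EuclideanSpace ℝ (Fin n)) : ℝ :=
  (∑ i, (A.mulVec x - b) i ^ 2)
    + 2 * τ * ∑ k, (x k * erf (x k / (Real.sqrt 2 * σ))
        + Real.sqrt (2 / π) * σ * Real.exp (-(x k) ^ 2 / (2 * σ ^ 2)))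

lemma hasDerivAt_erf (t : ℝ) : HasDerivAt erf (2 / Real.sqrt π * Real.exp (-t ^ 2)) t := by
  have hc : Continuous fun u : ℝ => Real.exp (-u ^ 2) := by continuity
  have h := intervalIntegral.integral_hasDerivAt_right
    (hc.intervalIntegrable 0 t) (hc.stronglyMeasurableAtFilter _ _) hc.continuousAt
  exact h.const_mul (2 / Real.sqrt π)

lemma hasDerivAt_phi (σ : ℝ) (hσ : 0 < σ) (t : ℝ) :
    HasDerivAt (fun t => t * erf (t / (Real.sqrt 2 * σ))
      + Real.sqrt (2 / π) * σ * Real.exp (-t ^ 2 / (2 * σ ^ 2)))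
      (erf (t / (Real.sqrt 2 * σ))) t := by
  set c : ℝ := Real.sqrt 2 * σ with hc
  have h2 : (0:ℝ) < Real.sqrt 2 := by positivity
  have hπ : (0:ℝ) < Real.sqrt π := Real.sqrt_pos.2 Real.pi_pos
  have hcpos : (0:ℝ) < c := by positivity
  have h1 : HasDerivAt (fun t : ℝ => t / c) (1 / c) t := (hasDerivAt_id t).div_const c
  have h3 : HasDerivAt (fun t : ℝ => erf (t / c))
      (2 / Real.sqrt π * Real.exp (-(t / c) ^ 2) * (1 / c)) t :=
    (hasDerivAt_erf (t / c)).comp (h₂ := erf) (h := fun t : ℝ => t / c) t h1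
  have h4 : HasDerivAt (fun t : ℝ => t * erf (t / c))
      (1 * erf (t / c) + t * (2 / Real.sqrt π * Real.exp (-(t / c) ^ 2) * (1 / c))) t :=
    (hasDerivAt_id t).mul h3
  have h5 : HasDerivAt (fun t : ℝ => -t ^ 2 / (2 * σ ^ 2)) (-(2 * t) / (2 * σ ^ 2)) t := by
    have h : HasDerivAt (fun t : ℝ => -t ^ 2) (-(2 * t)) t := by
      have h' := (hasDerivAt_pow 2 t).neg
      simp at h'
      exact h'
    exact h.div_const _
  have h6 : HasDerivAt (fun t : ℝ => Real.sqrt (2 / π) * σ * Real.exp (-t ^ 2 / (2 * σ ^ 2)))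
      (Real.sqrt (2 / π) * σ * (Real.exp (-t ^ 2 / (2 * σ ^ 2)) * (-(2 * t) / (2 * σ ^ 2)))) t :=
    ((Real.hasDerivAt_exp _).comp t h5).const_mul _
  have hsq : (-(t / c) ^ 2) = -t ^ 2 / (2 * σ ^ 2) := by
    rw [hc, div_pow, mul_pow, Real.sq_sqrt (by norm_num : (0:ℝ) ≤ 2)]
    ring
  have hsqrt : Real.sqrt (2 / π) = Real.sqrt 2 / Real.sqrt π :=
    Real.sqrt_div (by norm_num) π
  have h22 : Real.sqrt 2 * Real.sqrt 2 = 2 := Real.mul_self_sqrt (by norm_num)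
  have htotal := h4.add h6
  refine htotal.congr_deriv (Eq.symm ?_)
  rw [hsq, hsqrt, hc]
  field_simp
  ring_nf
  rw [Real.sq_sqrt (by norm_num : (0:ℝ) ≤ 2)]
  ring

/-- `H_{1,σ}` is differentiable everywhere with gradient
`∇H_{1,σ}(x) = 2Aᵀ(Ax − b) + 2τ·(erf(x_k/(√2σ)))_k`. -/
theorem gradient_H1 {m n : ℕ} (A : Matrix (Fin m) (Fin n) ℝ) (b : Fin m → ℝ)
    (τ σ : ℝ) (hτ : 0 < τ) (hσ : 0 < σ) :
    Differentiable ℝ (H1 A b τ σ) ∧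
      ∀ x : EuclideanSpace ℝ (Fin n),
        HasGradientAt (H1 A b τ σ)
          (WithLp.toLp 2 (fun k => 2 * (Aᵀ.mulVec (A.mulVec x - b)) k
              + 2 * τ * erf (x k / (Real.sqrt 2 * σ))) : EuclideanSpace ℝ (Fin n)) x := by
  have key : ∀ x : EuclideanSpace ℝ (Fin n),
      HasGradientAt (H1 A b τ σ)
        (WithLp.toLp 2 (fun k => 2 * (Aᵀ.mulVec (A.mulVec x - b)) k
            + 2 * τ * erf (x k / (Real.sqrt 2 * σ))) : EuclideanSpace ℝ (Fin n)) x := by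
    intro x
    set L : Fin m → (EuclideanSpace ℝ (Fin n) →L[ℝ] ℝ) := fun i => ∑ j, A i j • EuclideanSpace.proj j with hL
    have hLapp : ∀ i (z : EuclideanSpace ℝ (Fin n)), L i z = A.mulVec z i := by
      intro i z
      simp only [hL, ContinuousLinearMap.sum_apply, ContinuousLinearMap.smul_apply,
        smul_eq_mul, Matrix.mulVec, dotProduct]
      rfl
    -- quadratic part
    have hquad : HasFDerivAt (fun z : EuclideanSpace ℝ (Fin n) => ∑ i, (A.mulVec z - b) i ^ 2)
        (∑ i, (2 * ((A.mulVec x - b) i)) • L i) x := by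
      apply HasFDerivAt.fun_sum
      intro i _
      have hproj : ∀ (j : Fin n) (z : EuclideanSpace ℝ (Fin n)), (EuclideanSpace.proj j) z = z j :=
        fun _ _ => rfl
      have hs : HasDerivAt (fun s : ℝ => (s - b i) ^ 2) (2 * ((A.mulVec x - b) i)) (L i x) := by
        have := ((hasDerivAt_id (L i x)).sub_const (b i)).pow 2
        simp [hLapp] at this
        rw [hLapp, Pi.sub_apply]
        exact this
      have h := hs.comp_hasFDerivAt x (L i).hasFDerivAt
      apply h.congr_of_eventuallyEq
      filter_upwards with z
      simp [Function.comp, hLapp]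
    -- phi part
    have hphi : HasFDerivAt (fun z : EuclideanSpace ℝ (Fin n) => ∑ k, (z k * erf (z k / (Real.sqrt 2 * σ))
          + Real.sqrt (2 / π) * σ * Real.exp (-(z k) ^ 2 / (2 * σ ^ 2))))
        (∑ k, erf (x k / (Real.sqrt 2 * σ)) • (EuclideanSpace.proj k : EuclideanSpace ℝ (Fin n) →L[ℝ] ℝ)) x := by
      apply HasFDerivAt.fun_sum
      intro k _
      have h := (hasDerivAt_phi σ hσ (x k)).comp_hasFDerivAt x
        (EuclideanSpace.proj k : EuclideanSpace ℝ (Fin n) →L[ℝ] ℝ).hasFDerivAt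
      apply h.congr_of_eventuallyEq
      filter_upwards with z
      simp [Function.comp]
    have hfull := hquad.add (hphi.const_mul (2 * τ))
    rw [hasGradientAt_iff_hasFDerivAt]
    have hEq : (InnerProductSpace.toDual ℝ (EuclideanSpace ℝ (Fin n)))
        (WithLp.toLp 2 (fun k => 2 * (Aᵀ.mulVec (A.mulVec x - b)) k
            + 2 * τ * erf (x k / (Real.sqrt 2 * σ))) : EuclideanSpace ℝ (Fin n))
        = (∑ i, (2 * ((A.mulVec x - b) i)) • L i)
          + (2 * τ) • (∑ k, erf (x k / (Real.sqrt 2 * σ)) • (EuclideanSpace.proj k : EuclideanSpace ℝ (Fin n) →L[ℝ] ℝ)) := by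
      apply ContinuousLinearMap.ext
      intro h
      have hproj : ∀ (j : Fin n) (z : EuclideanSpace ℝ (Fin n)), (EuclideanSpace.proj j) z = z j :=
        fun _ _ => rfl
      simp only [InnerProductSpace.toDual_apply_apply, PiLp.inner_apply, RCLike.inner_apply,
        conj_trivial, ContinuousLinearMap.add_apply, ContinuousLinearMap.sum_apply,
        ContinuousLinearMap.smul_apply, hproj, smul_eq_mul, hL,
        Matrix.mulVec, dotProduct, Matrix.transpose_apply]
      simp only [mul_add]
      rw [Finset.sum_add_distrib]
      congr 1
      · simp only [Finset.sum_mul, Finset.mul_sum]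
        rw [Finset.sum_comm]
        exact Finset.sum_congr rfl fun i _ => Finset.sum_congr rfl fun k _ => by ring
      · rw [Finset.mul_sum]
        exact Finset.sum_congr rfl fun k _ => by ring
    rw [hEq]
    exact hfull.congr_of_eventuallyEq (by filter_upwards with z; simp [H1])
  exact ⟨fun x => ((key x).differentiableAt), key⟩
end
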